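/- Let R be a rack and A a commutative ring. Define the shifting maps σ_n : C^R_n(R;A) → C^R_{n−1}(R;A) on basis elements by σ_n(x₁, x₂, …, xₙ) = (x₂, …, xₙ). Then for every n ≥ 3, ∂_{n−1} ∘ σ_n = σ_{n−1} ∘ ∂_n. -/

import Mathlib

/-- A rack in the convention of the paper: two binary operations `◁` (`tri`) and
`◀` (`triInv`) that are mutually inverse on the right and right self-distributive. -/
class PaperRack (α : Type*) where
  tri : α → α → α
  triInv : α → α → α
  triInv_tri : ∀ a b, triInv (tri a b) b = a
  tri_triInv : ∀ a b, tri (triInv a b) b = a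
  tri_tri : ∀ a b c, tri (tri a b) c = tri (tri a c) (tri b c)

/-- A quandle: a rack whose operations are idempotent. -/
class PaperQuandle (α : Type*) extends PaperRack α where
  tri_self : ∀ a, tri a a = a
  triInv_self : ∀ a, triInv a a = a

open PaperRack

/-- The rack chain module `C^R_n(R; A)`: the free `A`-module on `n`-tuples of
elements of `R` (for `n = 0` this is free on the unique empty tuple, i.e. `A`). -/
abbrev RackChains (R A : Type*) [CommRing A] (n : ℕ) : Type _ := (Fin n → R) →₀ A

/-- The `i`-th "acted" face of a tuple: delete the `i`-th entry and act by it on all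
earlier entries: `(x₁ ◁ x_i, …, x_{i−1} ◁ x_i, x_{i+1}, …, xₙ)`. -/
def dTop {R : Type*} [PaperRack R] {m : ℕ} (i : Fin (m + 1)) (x : Fin (m + 1) → R) :
    Fin m → R :=
  fun j => if ((i.succAbove j : Fin (m + 1)) : ℕ) < (i : ℕ)
    then tri (x (i.succAbove j)) (x i) else x (i.succAbove j)

/-- The `i`-th "deleted" face of a tuple: `(x₁, …, x_{i−1}, x_{i+1}, …, xₙ)`. -/
def dBot {R : Type*} {m : ℕ} (i : Fin (m + 1)) (x : Fin (m + 1) → R) : Fin m → R :=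
  fun j => x (i.succAbove j)

/-- The boundary map `∂_{m+1} : C^R_{m+1}(R;A) → C^R_m(R;A)`; for `m + 1 ≥ 2` it is
`∂_n(x₁,…,xₙ) = Σ_{i=1}^{n} (−1)^{n−i} [(x₁◁x_i,…,x_{i−1}◁x_i,x_{i+1},…,xₙ)
− (x₁,…,x_{i−1},x_{i+1},…,xₙ)]`, and `∂₁(x) = 1`. -/
noncomputable def rackBoundary (R A : Type*) [PaperRack R] [CommRing A] :
    (m : ℕ) → RackChains R A (m + 1) →ₗ[A] RackChains R A m
  | 0 => Finsupp.lsum A fun _ =>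
      LinearMap.toSpanSingleton A _ (Finsupp.single (fun i : Fin 0 => i.elim0) (1 : A))
  | (m + 1) => Finsupp.lsum A fun x => LinearMap.toSpanSingleton A _
      (∑ i : Fin (m + 2), ((-1 : A) ^ (m + 1 - (i : ℕ))) •
        (Finsupp.single (dTop i x) (1 : A) - Finsupp.single (dBot i x) (1 : A)))

/-- The degenerate chains `C^D_n(Q;A)`: the span of the `n`-tuples having two equal
adjacent entries. -/
noncomputable def Degen (R A : Type*) [CommRing A] (n : ℕ) : Submodule A (RackChains R A n) :=
  Submodule.span A
    { c | ∃ x : Fin n → R,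
        (∃ i : ℕ, ∃ h : i + 1 < n, x ⟨i, by omega⟩ = x ⟨i + 1, h⟩) ∧
        c = Finsupp.single x (1 : A) }

/-- The shifting map `σ_{m+1} : C^R_{m+1}(R;A) → C^R_m(R;A)`,
`(x₁, x₂, …, xₙ) ↦ (x₂, …, xₙ)`. -/
noncomputable def shiftMap (R A : Type*) [CommRing A] (m : ℕ) :
    RackChains R A (m + 1) →ₗ[A] RackChains R A m :=
  Finsupp.lmapDomain A A fun x : Fin (m + 1) → R => x ∘ Fin.succ


lemma dTop_zero_eq {R : Type*} [PaperRack R] {m : ℕ} (x : Fin (m + 1) → R) :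
    dTop 0 x = dBot 0 x := by
  funext j
  simp [dTop, dBot]

lemma dTop_succ_comp {R : Type*} [PaperRack R] {m : ℕ} (i : Fin (m + 1))
    (x : Fin (m + 2) → R) : dTop i.succ x ∘ Fin.succ = dTop i (x ∘ Fin.succ) := by
  funext k
  simp only [dTop, Function.comp_apply, Fin.succ_succAbove_succ, Fin.val_succ]
  simp only [Nat.add_lt_add_iff_right]

lemma dBot_succ_comp {R : Type*} {m : ℕ} (i : Fin (m + 1))
    (x : Fin (m + 2) → R) : dBot i.succ x ∘ Fin.succ = dBot i (x ∘ Fin.succ) := by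
  funext k
  simp only [dBot, Function.comp_apply, Fin.succ_succAbove_succ]

/-- For every `n ≥ 3` (here `n = m + 3`), the shifting maps commute with the
boundaries: `∂_{n−1} ∘ σ_n = σ_{n−1} ∘ ∂_n`. -/
theorem rackBoundary_comp_shiftMap (R A : Type*) [PaperRack R] [CommRing A] (m : ℕ) :
    (rackBoundary R A (m + 1)).comp (shiftMap R A (m + 2)) =
      (shiftMap R A (m + 1)).comp (rackBoundary R A (m + 2)) := by
  apply Finsupp.lhom_ext
  intro x a
  have hx : ∀ (k : ℕ) (y : Fin (k + 1) → R),
      shiftMap R A k (Finsupp.single y (1 : A)) = Finsupp.single (y ∘ Fin.succ) 1 := by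
    intro k y
    simp [shiftMap, Finsupp.mapDomain_single]
  have key : (rackBoundary R A (m + 1)) (shiftMap R A (m + 2) (Finsupp.single x 1)) =
      (shiftMap R A (m + 1)) (rackBoundary R A (m + 2) (Finsupp.single x 1)) := by
    rw [hx, rackBoundary, rackBoundary, Finsupp.lsum_single, Finsupp.lsum_single,
      LinearMap.toSpanSingleton_apply_one, LinearMap.toSpanSingleton_apply_one, map_sum]
    conv_rhs => rw [Fin.sum_univ_succ]
    have h0 : (shiftMap R A (m + 1)) (((-1 : A) ^ (m + 2 - ((0 : Fin (m + 3)) : ℕ))) •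
        (Finsupp.single (dTop 0 x) (1 : A) - Finsupp.single (dBot 0 x) 1)) = 0 := by
      rw [dTop_zero_eq, sub_self, smul_zero, map_zero]
    rw [h0, zero_add]
    apply Finset.sum_congr rfl
    intro i _
    rw [map_smul, map_sub, hx, hx, dTop_succ_comp, dBot_succ_comp]
    congr 2
    simp [Fin.val_succ]
  have : Finsupp.single x a = a • Finsupp.single x (1 : A) := by
    rw [Finsupp.smul_single, smul_eq_mul, mul_one]
  simp only [LinearMap.comp_apply, this, map_smul, key]
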